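/- (Proposition 2.3, implication 3) ⇒ 1), trajectory version: a coercive Lyapunov inequality yields the infinite-time observability estimate.) Suppose there exists δ > 0 such that Re⟨x, Lx⟩ ≥ δ‖x‖² for all x ∈ X, and suppose the Lyapunov inequality Re(⟨Ax, Lx⟩ + ⟨Lx, Ax⟩) ≥ −‖Cx‖² holds for all x ∈ D. Let x : [0,∞) → X be differentiable with x(t) ∈ D and x′(t) = A(x(t)) for every t ≥ 0, suppose ‖x(t)‖ → 0 as t → ∞, and suppose t ↦ ‖C x(t)‖² is continuous and integrable on [0,∞). Then ∫₀^∞ ‖C x(t)‖² dt ≥ δ‖x(0)‖². -/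

import Mathlib

open MeasureTheory Filter

/-- STATEMENT 6 (Proposition 2.3, implication 3) ⇒ 1), trajectory version): a coercive
Lyapunov inequality yields the infinite-time observability estimate
`∫₀^∞ ‖C x(t)‖² dt ≥ δ‖x(0)‖²` along any trajectory `x′(t) = A x(t)` with `‖x(t)‖ → 0`. -/
theorem lyapunov_ineq_implies_infinite_time_observability
    {X Y : Type*} [NormedAddCommGroup X] [InnerProductSpace ℂ X] [CompleteSpace X]
    [NormedAddCommGroup Y] [InnerProductSpace ℂ Y] [CompleteSpace Y]
    (D : Submodule ℂ X) (A : D →ₗ[ℂ] X) (C : D →ₗ[ℂ] Y)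
    (L : X →L[ℂ] X) (hL : IsSelfAdjoint L)
    (δ : ℝ) (hδ : 0 < δ)
    (hcoer : ∀ x : X, δ * ‖x‖ ^ 2 ≤ (inner ℂ x (L x) : ℂ).re)
    (hlyap : ∀ x : D, -(‖C x‖ ^ 2) ≤
      ((inner ℂ (A x) (L (x : X)) : ℂ) + (inner ℂ (L (x : X)) (A x) : ℂ)).re)
    (x : ℝ → X) (hxD : ∀ t, 0 ≤ t → x t ∈ D)
    (hx' : ∀ t, ∀ ht : 0 ≤ t, HasDerivWithinAt x (A ⟨x t, hxD t ht⟩) (Set.Ici 0) t)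
    (hxdecay : Tendsto (fun t => ‖x t‖) atTop (nhds 0))
    (g : ℝ → ℝ) (hg : ∀ t, ∀ ht : 0 ≤ t, g t = ‖C ⟨x t, hxD t ht⟩‖ ^ 2)
    (hgcont : ContinuousOn g (Set.Ici 0))
    (hgint : IntegrableOn g (Set.Ici 0)) :
    δ * ‖x 0‖ ^ 2 ≤ ∫ t in Set.Ici (0 : ℝ), g t := by
  set V : ℝ → ℝ := fun t => (inner ℂ (x t) (L (x t)) : ℂ).re with hVdef
  -- self-adjointness
  have hsa : ∀ u v : X, (inner ℂ (L u) v : ℂ) = inner ℂ u (L v) := by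
    intro u v
    conv_lhs => rw [← hL.adjoint_eq]
    exact ContinuousLinearMap.adjoint_inner_left L v u
  -- V is continuous on Ici 0
  have hVd : ∀ (t : ℝ) (ht : 0 ≤ t),
      HasDerivWithinAt V
        ((inner ℂ (x t) (L (A ⟨x t, hxD t ht⟩)) + inner ℂ (A ⟨x t, hxD t ht⟩ : X) (L (x t)) : ℂ).re)
        (Set.Ici 0) t := by
    intro t ht
    have hx'' := hx' t ht
    have hLx : HasDerivWithinAt (fun s => L (x s)) (L (A ⟨x t, hxD t ht⟩)) (Set.Ici 0) t :=
      (L.restrictScalars ℝ).hasFDerivAt.comp_hasDerivWithinAt t hx''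
    have hinner := hx''.inner ℂ hLx
    exact Complex.reCLM.hasFDerivAt.comp_hasDerivWithinAt t hinner
  have hVcont : ContinuousOn V (Set.Ici 0) := fun t ht => (hVd t ht).continuousWithinAt
  -- the primitive
  set I : ℝ → ℝ := fun t => ∫ s in (0:ℝ)..t, g s with hIdef
  have hgint' : ∀ T : ℝ, 0 ≤ T → IntervalIntegrable g volume 0 T := by
    intro T hT
    apply IntegrableOn.intervalIntegrable
    rw [Set.uIcc_of_le hT]
    exact hgint.mono_set (Set.Icc_subset_Ici_self)
  -- g is nonnegative a.e. on Ici 0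
  have hgnn : 0 ≤ᵐ[volume.restrict (Set.Ici (0:ℝ))] g := by
    filter_upwards [ae_restrict_mem measurableSet_Ici] with t ht
    rw [hg t ht]; positivity
  -- interval integrals are bounded by the full integral
  have hIle : ∀ T : ℝ, 0 ≤ T → I T ≤ ∫ t in Set.Ici (0:ℝ), g t := by
    intro T hT
    rw [hIdef]
    simp only
    rw [intervalIntegral.integral_of_le hT]
    exact setIntegral_mono_set hgint hgnn
      (Filter.Eventually.of_forall fun t ht => le_of_lt (Set.mem_Ioc.1 ht).1)
  -- key monotonicity: V 0 ≤ V T + I T for T ≥ 0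
  have hkey : ∀ T : ℝ, 0 ≤ T → V 0 ≤ V T + I T := by
    intro T hT
    have hmono : MonotoneOn (fun t => V t + I t) (Set.Icc 0 T) := by
      have hder : ∀ t ∈ interior (Set.Icc (0:ℝ) T), ∃ c, HasDerivAt (fun t => V t + I t) c t ∧ 0 ≤ c := by
        intro t ht
        rw [interior_Icc] at ht
        obtain ⟨ht0, htT⟩ := ht
        have ht0' := ht0.le
        have hVt : HasDerivAt V
            ((inner ℂ (x t) (L (A ⟨x t, hxD t ht0'⟩)) + inner ℂ (A ⟨x t, hxD t ht0'⟩ : X) (L (x t)) : ℂ).re) t :=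
          (hVd t ht0').hasDerivAt (Ici_mem_nhds ht0)
        have hIt : HasDerivAt I (g t) t := by
          refine intervalIntegral.integral_hasDerivAt_right (hgint' t ht0') ?_ ?_
          · exact AEStronglyMeasurable.stronglyMeasurableAtFilter_of_mem
              (hgcont.aestronglyMeasurable measurableSet_Ici) (Ici_mem_nhds ht0)
          · exact hgcont.continuousAt (Ici_mem_nhds ht0)
        refine ⟨_, hVt.add hIt, ?_⟩
        set ξ : D := ⟨x t, hxD t ht0'⟩
        have h1 : (inner ℂ (x t) (L (A ξ)) : ℂ) = inner ℂ (L (x t)) (A ξ) := (hsa (x t) (A ξ)).symm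
        have h2 := hlyap ξ
        have hgt : g t = ‖C ξ‖ ^ 2 := hg t ht0'
        have : -(g t) ≤ ((inner ℂ (x t) (L (A ξ)) : ℂ) + inner ℂ (A ξ : X) (L (x t))).re := by
          rw [h1, hgt]
          calc -(‖C ξ‖^2) ≤ ((inner ℂ (A ξ) (L (ξ : X)) : ℂ) + (inner ℂ (L (ξ : X)) (A ξ) : ℂ)).re := h2
            _ = ((inner ℂ (L (x t)) (A ξ) : ℂ) + inner ℂ (A ξ : X) (L (x t))).re := by
                rw [add_comm]
        linarith
      have hdiff : DifferentiableOn ℝ (fun t => V t + I t) (interior (Set.Icc (0:ℝ) T)) :=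
        fun t ht => ((hder t ht).choose_spec.1).differentiableAt.differentiableWithinAt
      refine monotoneOn_of_deriv_nonneg (convex_Icc 0 T) ?_ hdiff ?_
      · refine ContinuousOn.add (hVcont.mono ?_) ?_
        · exact Set.Icc_subset_Ici_self
        · have := intervalIntegral.continuousOn_primitive_interval
            (f := g) (μ := volume) (a := (0:ℝ)) (b := T) ?_
          · rwa [Set.uIcc_of_le hT] at this
          · rw [Set.uIcc_of_le hT]; exact hgint.mono_set Set.Icc_subset_Ici_self
      · intro t ht
        obtain ⟨c, hc, hc0⟩ := hder t ht
        rw [hc.deriv]; exact hc0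
    have h0mem : (0:ℝ) ∈ Set.Icc (0:ℝ) T := Set.left_mem_Icc.2 hT
    have hTmem : T ∈ Set.Icc (0:ℝ) T := Set.right_mem_Icc.2 hT
    have := hmono h0mem hTmem hT
    simpa [hIdef, intervalIntegral.integral_same] using this
  -- V T → 0
  have hVlim : Tendsto V atTop (nhds 0) := by
    have hb : ∀ T : ℝ, ‖V T‖ ≤ ‖L‖ * ‖x T‖ ^ 2 := by
      intro T
      have h1 : |(inner ℂ (x T) (L (x T)) : ℂ).re| ≤ ‖(inner ℂ (x T) (L (x T)) : ℂ)‖ :=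
        Complex.abs_re_le_norm _
      have h2 : ‖(inner ℂ (x T) (L (x T)) : ℂ)‖ ≤ ‖x T‖ * ‖L (x T)‖ := norm_inner_le_norm _ _
      have h3 : ‖L (x T)‖ ≤ ‖L‖ * ‖x T‖ := L.le_opNorm _
      have h4 : ‖x T‖ * ‖L (x T)‖ ≤ ‖x T‖ * (‖L‖ * ‖x T‖) :=
        mul_le_mul_of_nonneg_left h3 (norm_nonneg _)
      calc ‖V T‖ = |(inner ℂ (x T) (L (x T)) : ℂ).re| := rfl
        _ ≤ ‖x T‖ * (‖L‖ * ‖x T‖) := le_trans h1 (le_trans h2 h4)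
        _ = ‖L‖ * ‖x T‖ ^ 2 := by ring
    have hlim2 : Tendsto (fun T => ‖L‖ * ‖x T‖ ^ 2) atTop (nhds 0) := by
      have := (hxdecay.pow 2).const_mul ‖L‖
      simpa using this
    exact squeeze_zero_norm hb hlim2
  -- conclude
  have hfinal : V 0 ≤ ∫ t in Set.Ici (0:ℝ), g t := by
    have hlim : Tendsto (fun T => V T + ∫ t in Set.Ici (0:ℝ), g t) atTop
        (nhds (0 + ∫ t in Set.Ici (0:ℝ), g t)) := hVlim.add tendsto_const_nhds
    rw [zero_add] at hlim
    refine ge_of_tendsto hlim ?_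
    filter_upwards [eventually_ge_atTop (0:ℝ)] with T hT
    exact le_trans (hkey T hT) (add_le_add_right (hIle T hT) _)
  exact le_trans (hcoer (x 0)) hfinal
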